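/- Let m ≥ 2 be an integer and D a unit of Z_m. Every row and every column of a matrix in G_D lies in V = {(a,b) ∈ Z_m × Z_m : gcd(a,b,m) = 1}, and for every (a,b) ∈ V the number of matrices in G_D whose bottom row equals (a,b) is exactly m; the same count m holds for the top row, the left column and the right column. (Equivalently, if U is uniformly distributed on G_D, then each row and each column of U is uniformly distributed on V.) -/
import Mathlib


/-- `(a, b) ∈ ℤ/mℤ × ℤ/mℤ` lies in `V`, i.e. `gcd(a, b, m) = 1` (computed with the canonical
integer representatives). -/
def inV (m : ℕ) [NeZero m] (v : ZMod m × ZMod m) : Prop :=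
  Nat.gcd (Nat.gcd v.1.val v.2.val) m = 1

lemma inV_iff {m : ℕ} [NeZero m] (a b : ZMod m) :
    inV m (a, b) ↔ ∃ x y : ZMod m, a * x + b * y = 1 := by
  constructor
  · intro h
    unfold inV at h
    set n := Nat.gcd a.val b.val with hn
    have hu : IsUnit ((n : ℕ) : ZMod m) := (ZMod.isUnit_iff_coprime n m).mpr h
    obtain ⟨u, hu⟩ := hu
    have hb : ((n : ℕ) : ZMod m) =
        a * ((Nat.gcdA a.val b.val : ℤ) : ZMod m) + b * ((Nat.gcdB a.val b.val : ℤ) : ZMod m) := by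
      have := congrArg (Int.cast : ℤ → ZMod m) (Nat.gcd_eq_gcd_ab a.val b.val)
      push_cast at this
      simpa [ZMod.natCast_val, ZMod.cast_id] using this
    refine ⟨((Nat.gcdA a.val b.val : ℤ) : ZMod m) * ↑u⁻¹,
            ((Nat.gcdB a.val b.val : ℤ) : ZMod m) * ↑u⁻¹, ?_⟩
    calc a * (((Nat.gcdA a.val b.val : ℤ) : ZMod m) * ↑u⁻¹)
          + b * (((Nat.gcdB a.val b.val : ℤ) : ZMod m) * ↑u⁻¹)
        = (a * ((Nat.gcdA a.val b.val : ℤ) : ZMod m)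
            + b * ((Nat.gcdB a.val b.val : ℤ) : ZMod m)) * ↑u⁻¹ := by ring
      _ = ↑u * ↑u⁻¹ := by rw [← hb, hu]
      _ = 1 := u.mul_inv
  · rintro ⟨x, y, hxy⟩
    set g := Nat.gcd (Nat.gcd a.val b.val) m with hg
    have hgm : g ∣ m := Nat.gcd_dvd_right _ _
    have hga : g ∣ a.val := (Nat.gcd_dvd_left _ _).trans (Nat.gcd_dvd_left _ _)
    have hgb : g ∣ b.val := (Nat.gcd_dvd_left _ _).trans (Nat.gcd_dvd_right _ _)
    haveI : NeZero g := ⟨Nat.gcd_ne_zero_right (NeZero.ne m)⟩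
    let φ := ZMod.castHom hgm (ZMod g)
    have ha0 : φ a = 0 := by
      rw [ZMod.castHom_apply, ← ZMod.natCast_val]
      exact (ZMod.natCast_eq_zero_iff _ _).mpr hga
    have hb0 : φ b = 0 := by
      rw [ZMod.castHom_apply, ← ZMod.natCast_val]
      exact (ZMod.natCast_eq_zero_iff _ _).mpr hgb
    have h1 : (1 : ZMod g) = 0 := by
      have := congrArg φ hxy
      rw [map_add, map_mul, map_mul, ha0, hb0, map_one] at this
      simpa using this.symm
    have : g ∣ 1 := by
      have := (ZMod.natCast_eq_zero_iff 1 g).mp (by exact_mod_cast h1)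
      exact this
    exact Nat.dvd_one.mp this

lemma fiber_card {m : ℕ} [NeZero m] (a b x y : ZMod m) (h : a * x + b * y = 1) (t : ZMod m) :
    Nat.card {p : ZMod m × ZMod m // a * p.1 + b * p.2 = t} = m := by
  classical
  -- all fibers are equinumerous with the fiber over 0
  have key : ∀ s : ZMod m,
      Nat.card {p : ZMod m × ZMod m // a * p.1 + b * p.2 = s}
        = Nat.card {p : ZMod m × ZMod m // a * p.1 + b * p.2 = 0} := by
    intro s
    refine Nat.card_congr ⟨fun p => ⟨(p.1.1 - x * s, p.1.2 - y * s), ?_⟩,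
      fun p => ⟨(p.1.1 + x * s, p.1.2 + y * s), ?_⟩, ?_, ?_⟩
    · have := p.2; simp only []; linear_combination this - s * h
    · have := p.2; simp only []; linear_combination this + s * h
    · rintro ⟨⟨c, d⟩, hp⟩; simp
    · rintro ⟨⟨c, d⟩, hp⟩; simp
  have total : m * m = m * Nat.card {p : ZMod m × ZMod m // a * p.1 + b * p.2 = 0} := by
    have := Fintype.card_congr
      (Equiv.sigmaFiberEquiv (fun p : ZMod m × ZMod m => a * p.1 + b * p.2)).symm
    rw [Fintype.card_prod, ZMod.card, Fintype.card_sigma] at this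
    rw [this]
    rw [Finset.sum_congr rfl (fun s _ => ?_)]
    · rw [Finset.sum_const, Finset.card_univ, ZMod.card, smul_eq_mul]
    · rw [← Nat.card_eq_fintype_card, key s, Nat.card_eq_fintype_card]
  rw [key t, ← Nat.eq_of_mul_eq_mul_left (Nat.pos_of_ne_zero (NeZero.ne m)) total]

/-- Let `m ≥ 2` and let `D` be a unit of `ℤ/mℤ`. Every row and every column of
a matrix in `G_D` lies in `V = {(a,b) : gcd(a,b,m) = 1}`, and for every `(a,b) ∈ V` and each of
the two rows (resp. each of the two columns), the number of matrices in `G_D` with that row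
(resp. column) equal to `(a,b)` is exactly `m`. -/
theorem stmt_2 (m : ℕ) [NeZero m] (hm : 2 ≤ m) (D : (ZMod m)ˣ) :
    (∀ A : Matrix (Fin 2) (Fin 2) (ZMod m), A.det = (D : ZMod m) →
      (∀ i : Fin 2, inV m (A i 0, A i 1)) ∧ (∀ j : Fin 2, inV m (A 0 j, A 1 j))) ∧
    (∀ a b : ZMod m, inV m (a, b) →
      (∀ i : Fin 2,
        Nat.card {A : Matrix (Fin 2) (Fin 2) (ZMod m) //
          A.det = (D : ZMod m) ∧ A i 0 = a ∧ A i 1 = b} = m) ∧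
      (∀ j : Fin 2,
        Nat.card {A : Matrix (Fin 2) (Fin 2) (ZMod m) //
          A.det = (D : ZMod m) ∧ A 0 j = a ∧ A 1 j = b} = m)) := by
  have hD : (D : ZMod m) * ((D⁻¹ : (ZMod m)ˣ) : ZMod m) = 1 := D.mul_inv
  constructor
  · intro A hd
    rw [Matrix.det_fin_two] at hd
    constructor
    · rw [Fin.forall_fin_two]
      constructor <;> rw [inV_iff]
      · exact ⟨A 1 1 * ↑D⁻¹, -(A 1 0) * ↑D⁻¹, by linear_combination (↑D⁻¹ : ZMod m) * hd + hD⟩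
      · exact ⟨-(A 0 1) * ↑D⁻¹, A 0 0 * ↑D⁻¹, by linear_combination (↑D⁻¹ : ZMod m) * hd + hD⟩
    · rw [Fin.forall_fin_two]
      constructor <;> rw [inV_iff]
      · exact ⟨A 1 1 * ↑D⁻¹, -(A 0 1) * ↑D⁻¹, by linear_combination (↑D⁻¹ : ZMod m) * hd + hD⟩
      · exact ⟨-(A 1 0) * ↑D⁻¹, A 0 0 * ↑D⁻¹, by linear_combination (↑D⁻¹ : ZMod m) * hd + hD⟩
  · intro a b hab
    obtain ⟨x, y, hxy⟩ := (inV_iff a b).mp hab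
    constructor
    · rw [Fin.forall_fin_two]
      constructor
      · -- row 0 : fiber (-b) * p.1 + a * p.2 = D
        refine (Nat.card_congr
          (⟨fun A => ⟨(A.1 1 0, A.1 1 1), by
              obtain ⟨hd, h1, h2⟩ := A.2
              rw [Matrix.det_fin_two, h1, h2] at hd
              linear_combination hd⟩,
            fun p => ⟨!![a, b; p.1.1, p.1.2],
              ⟨by simp [Matrix.det_fin_two_of]; linear_combination p.2, by simp, by simp⟩⟩,
            fun A => Subtype.ext (by
              ext i j
              fin_cases i <;> fin_cases j <;> simp [A.2.2.1, A.2.2.2]),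
            fun p => Subtype.ext (by simp)⟩ :
            {A : Matrix (Fin 2) (Fin 2) (ZMod m) //
              A.det = (D : ZMod m) ∧ A 0 0 = a ∧ A 0 1 = b} ≃
            {p : ZMod m × ZMod m // (-b) * p.1 + a * p.2 = (D : ZMod m)})).trans ?_
        exact fiber_card (-b) a (-y) x (by linear_combination hxy) _
      · -- row 1 : fiber b * p.1 + (-a) * p.2 = D
        refine (Nat.card_congr
          (⟨fun A => ⟨(A.1 0 0, A.1 0 1), by
              obtain ⟨hd, h1, h2⟩ := A.2
              rw [Matrix.det_fin_two, h1, h2] at hd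
              linear_combination hd⟩,
            fun p => ⟨!![p.1.1, p.1.2; a, b],
              ⟨by simp [Matrix.det_fin_two_of]; linear_combination p.2, by simp, by simp⟩⟩,
            fun A => Subtype.ext (by
              ext i j
              fin_cases i <;> fin_cases j <;> simp [A.2.2.1, A.2.2.2]),
            fun p => Subtype.ext (by simp)⟩ :
            {A : Matrix (Fin 2) (Fin 2) (ZMod m) //
              A.det = (D : ZMod m) ∧ A 1 0 = a ∧ A 1 1 = b} ≃
            {p : ZMod m × ZMod m // b * p.1 + (-a) * p.2 = (D : ZMod m)})).trans ?_
        exact fiber_card b (-a) y (-x) (by linear_combination hxy) _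
    · rw [Fin.forall_fin_two]
      constructor
      · -- col 0 : fiber (-b) * p.1 + a * p.2 = D  with p = (A 0 1, A 1 1)
        refine (Nat.card_congr
          (⟨fun A => ⟨(A.1 0 1, A.1 1 1), by
              obtain ⟨hd, h1, h2⟩ := A.2
              rw [Matrix.det_fin_two, h1, h2] at hd
              linear_combination hd⟩,
            fun p => ⟨!![a, p.1.1; b, p.1.2],
              ⟨by simp [Matrix.det_fin_two_of]; linear_combination p.2, by simp, by simp⟩⟩,
            fun A => Subtype.ext (by
              ext i j
              fin_cases i <;> fin_cases j <;> simp [A.2.2.1, A.2.2.2]),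
            fun p => Subtype.ext (by simp)⟩ :
            {A : Matrix (Fin 2) (Fin 2) (ZMod m) //
              A.det = (D : ZMod m) ∧ A 0 0 = a ∧ A 1 0 = b} ≃
            {p : ZMod m × ZMod m // (-b) * p.1 + a * p.2 = (D : ZMod m)})).trans ?_
        exact fiber_card (-b) a (-y) x (by linear_combination hxy) _
      · -- col 1 : fiber b * p.1 + (-a) * p.2 = D  with p = (A 0 0, A 1 0)
        refine (Nat.card_congr
          (⟨fun A => ⟨(A.1 0 0, A.1 1 0), by
              obtain ⟨hd, h1, h2⟩ := A.2
              rw [Matrix.det_fin_two, h1, h2] at hd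
              linear_combination hd⟩,
            fun p => ⟨!![p.1.1, a; p.1.2, b],
              ⟨by simp [Matrix.det_fin_two_of]; linear_combination p.2, by simp, by simp⟩⟩,
            fun A => Subtype.ext (by
              ext i j
              fin_cases i <;> fin_cases j <;> simp [A.2.2.1, A.2.2.2]),
            fun p => Subtype.ext (by simp)⟩ :
            {A : Matrix (Fin 2) (Fin 2) (ZMod m) //
              A.det = (D : ZMod m) ∧ A 0 1 = a ∧ A 1 1 = b} ≃
            {p : ZMod m × ZMod m // b * p.1 + (-a) * p.2 = (D : ZMod m)})).trans ?_
        exact fiber_card b (-a) y (-x) (by linear_combination hxy) _
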